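/- arXiv:dg-ga/9407003 — 3 statements merged into one kernel-verified Lean document; each statement's English description precedes it below -/
import Mathlib

section
/- Let (M, ω) be a symplectic manifold with a Hamiltonian G-action and equivariant momentum map F: M → 𝔤*, x ∈ M, α = F(x). Then the intersection of the symplectic perpendicular of the orbit tangent space with the orbit tangent space is the tangent space of the G_α-orbit: T_x(G·x)^ω ∩ T_x(G·x) = T_x(G_α·x), where G_α is the coadjoint isotropy group of α. -/
/-- Pointwise form: the intersection of the symplectic perpendicular of
the orbit tangent space `T_x(G·x) = range ξ_M` with the orbit tangent space equals
the tangent space `T_x(G_α·x)` of the orbit of the coadjoint isotropy algebra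
`𝔤_α = {η : ad*_η α = 0}`. -/
theorem stmt_8 {𝔤 T : Type*} [LieRing 𝔤] [LieAlgebra ℝ 𝔤]
    [AddCommGroup T] [Module ℝ T]
    (ω : T →ₗ[ℝ] T →ₗ[ℝ] ℝ)
    (hanti : ∀ u v : T, ω u v = - ω v u)
    (ξM : 𝔤 →ₗ[ℝ] T)
    (dF : T →ₗ[ℝ] Module.Dual ℝ 𝔤)
    (α : Module.Dual ℝ 𝔤)
    (hmom : ∀ (ξ : 𝔤) (v : T), ω (ξM ξ) v = dF v ξ)
    (hequiv : ∀ ξ η : 𝔤, dF (ξM η) ξ = α ⁅ξ, η⁆) :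
    {v : T | v ∈ Set.range ξM ∧ ∀ w ∈ Set.range ξM, ω v w = 0}
      = ξM '' {η : 𝔤 | ∀ ξ : 𝔤, α ⁅ξ, η⁆ = 0} := by
  ext v
  constructor
  · rintro ⟨⟨η, rfl⟩, h⟩
    refine ⟨η, fun ξ => ?_, rfl⟩
    have := h (ξM ξ) ⟨ξ, rfl⟩
    rw [hanti] at this
    have h2 : ω (ξM ξ) (ξM η) = 0 := by linarith
    rw [hmom, hequiv] at h2
    exact h2
  · rintro ⟨η, hη, rfl⟩
    refine ⟨⟨η, rfl⟩, ?_⟩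
    rintro w ⟨ξ, rfl⟩
    rw [hanti, hmom, hequiv, hη]
    simp
end

section
/- Let (V, ω) be a finite-dimensional symplectic vector space and X ⊆ V a subspace with null space ν = X ∩ X^ω. Then V is symplectically isomorphic to the direct sum E ⊕ N ⊕ (ν ⊕ ν*), where E = X/ν with the form induced by ω, N = X^ω/ν with the form induced by ω, and ν ⊕ ν* carries the canonical symplectic form ω_{ν⊕ν*}((v,l),(v',l')) = l'(v) - l(v'). -/
open Submodule Module

/-- The symplectic perpendicular of a subspace `X` with respect to a bilinear form. -/
def sympPerp {V : Type*} [AddCommGroup V] [Module ℝ V]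
    (ω : V →ₗ[ℝ] V →ₗ[ℝ] ℝ) (X : Submodule ℝ V) : Submodule ℝ V where
  carrier := {v : V | ∀ x ∈ X, ω v x = 0}
  add_mem' := by
    intro a b ha hb x hx
    simp [map_add, ha x hx, hb x hx]
  zero_mem' := by
    intro x hx
    simp
  smul_mem' := by
    intro c a ha x hx
    simp [ha x hx]

set_option maxHeartbeats 2000000 in
/-- For a subspace `X` of a symplectic vector space `(V, ω)` with null
space `ν = X ∩ X^ω`, the space `V` is symplectically isomorphic to
`E ⊕ N ⊕ (ν ⊕ ν*)` where `E = X/ν`, `N = X^ω/ν` carry the forms induced by `ω` and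
`ν ⊕ ν*` carries the canonical symplectic form `((v,l),(v',l')) ↦ l'(v) - l(v')`. -/
theorem stmt_10 {V : Type*} [AddCommGroup V] [Module ℝ V] [FiniteDimensional ℝ V]
    (ω : V →ₗ[ℝ] V →ₗ[ℝ] ℝ)
    (hanti : ∀ v w : V, ω v w = - ω w v)
    (hnd : ∀ v : V, v ≠ 0 → ∃ w : V, ω v w ≠ 0)
    (X : Submodule ℝ V)
    (ωE : (↥X ⧸ (X ⊓ sympPerp ω X).comap X.subtype) →ₗ[ℝ]
          (↥X ⧸ (X ⊓ sympPerp ω X).comap X.subtype) →ₗ[ℝ] ℝ)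
    (hωE : ∀ x y : X,
      ωE (Submodule.mkQ ((X ⊓ sympPerp ω X).comap X.subtype) x)
         (Submodule.mkQ ((X ⊓ sympPerp ω X).comap X.subtype) y) = ω x y)
    (ωN : (↥(sympPerp ω X) ⧸ (X ⊓ sympPerp ω X).comap (sympPerp ω X).subtype) →ₗ[ℝ]
          (↥(sympPerp ω X) ⧸ (X ⊓ sympPerp ω X).comap (sympPerp ω X).subtype) →ₗ[ℝ] ℝ)
    (hωN : ∀ x y : sympPerp ω X,
      ωN (Submodule.mkQ ((X ⊓ sympPerp ω X).comap (sympPerp ω X).subtype) x)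
         (Submodule.mkQ ((X ⊓ sympPerp ω X).comap (sympPerp ω X).subtype) y) = ω x y) :
    ∃ e : V ≃ₗ[ℝ]
        (↥X ⧸ (X ⊓ sympPerp ω X).comap X.subtype) ×
        (↥(sympPerp ω X) ⧸ (X ⊓ sympPerp ω X).comap (sympPerp ω X).subtype) ×
        (↥(X ⊓ sympPerp ω X) × Module.Dual ℝ ↥(X ⊓ sympPerp ω X)),
      ∀ v w : V,
        ω v w = ωE (e v).1 (e w).1 + ωN (e v).2.1 (e w).2.1 +
          ((e w).2.2.2 (e v).2.2.1 - (e v).2.2.2 (e w).2.2.1) := by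
  classical
  revert ωE hωE ωN hωN
  set N := sympPerp ω X with hNdef
  set ν := X ⊓ N with hνdef
  intro ωE hωE ωN hωN
  have hrefl : ω.IsRefl := fun v w h => by rw [hanti]; simp [h]
  have hndeg : LinearMap.BilinForm.Nondegenerate ω := by
    refine hrefl.nondegenerate_iff_separatingLeft.2 fun v hv => ?_
    by_contra h
    obtain ⟨w, hw⟩ := hnd v h
    exact hw (hv w)
  have hmemN : ∀ v : V, v ∈ N ↔ ∀ x ∈ X, ω v x = 0 := fun v => Iff.rfl
  -- sympPerp is the bilinear-form orthogonal
  have hperp : ∀ S : Submodule ℝ V, sympPerp ω S = LinearMap.BilinForm.orthogonal ω S := by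
    intro S
    ext v
    constructor
    · intro hv x hx
      exact hrefl v x (hv x hx)
    · intro hv x hx
      exact hrefl x v (hv x hx)
  -- basic vanishing
  have hNX : ∀ a b : V, a ∈ N → b ∈ X → ω a b = 0 := fun a b ha hb => ha b hb
  have hXN : ∀ a b : V, a ∈ X → b ∈ N → ω a b = 0 := fun a b ha hb => by
    rw [hanti]; rw [hNX b a hb ha]; ring
  have hνX : ν ≤ X := inf_le_left
  have hνN : ν ≤ N := inf_le_right
  -- complements of ν inside X and N
  obtain ⟨W', hW'⟩ := Submodule.exists_isCompl (ν.comap X.subtype)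
  obtain ⟨Y', hY'⟩ := Submodule.exists_isCompl (ν.comap N.subtype)
  set W : Submodule ℝ V := W'.map X.subtype with hWdef
  set Y : Submodule ℝ V := Y'.map N.subtype with hYdef
  have hWX : W ≤ X := map_subtype_le X W'
  have hYN : Y ≤ N := map_subtype_le N Y'
  have hmapν : (ν.comap X.subtype).map X.subtype = ν := by
    rw [Submodule.map_comap_subtype, inf_eq_right.2 hνX]
  have hmapνN : (ν.comap N.subtype).map N.subtype = ν := by
    rw [Submodule.map_comap_subtype, inf_eq_right.2 hνN]
  have hWν : W ⊓ ν = ⊥ := by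
    rw [hWdef, ← hmapν, ← Submodule.map_inf _ (injective_subtype X),
      inf_comm, hW'.inf_eq_bot, Submodule.map_bot]
  have hYν : Y ⊓ ν = ⊥ := by
    rw [hYdef, ← hmapνN, ← Submodule.map_inf _ (injective_subtype N),
      inf_comm, hY'.inf_eq_bot, Submodule.map_bot]
  have hWνX : W ⊔ ν = X := by
    rw [hWdef, ← hmapν, ← Submodule.map_sup, sup_comm, hW'.sup_eq_top,
      Submodule.map_top, Submodule.range_subtype]
  have hYνN : Y ⊔ ν = N := by
    rw [hYdef, ← hmapνN, ← Submodule.map_sup, sup_comm, hY'.sup_eq_top,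
      Submodule.map_top, Submodule.range_subtype]
  -- U = W ⊔ Y
  set U : Submodule ℝ V := W ⊔ Y with hUdef
  have hWU : W ≤ U := le_sup_left
  have hYU : Y ≤ U := le_sup_right
  -- the restriction of ω to U is nondegenerate
  have hrestU : (LinearMap.BilinForm.restrict ω U).Nondegenerate := by
    refine (LinearMap.IsRefl.nondegenerate_iff_separatingLeft
      (B := LinearMap.BilinForm.restrict ω U) (fun a b h => hrefl _ _ h)).2 fun u hu => ?_
    obtain ⟨w, hw, y, hy, hwy⟩ := Submodule.mem_sup.1 u.2
    -- ω ↑u vanishes on ν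
    have huν : ∀ n ∈ ν, ω (u : V) n = 0 := by
      intro n hn
      rw [← hwy, map_add, LinearMap.add_apply, hXN w n (hWX hw) (hνN hn),
        hNX y n (hYN hy) (hνX hn), add_zero]
    have huU : ∀ x ∈ U, ω (u : V) x = 0 := by
      intro x hx
      exact hu ⟨x, hx⟩
    -- so ω ↑u vanishes on X and on N
    have huX : (u : V) ∈ N := by
      intro x hx
      rw [← hWνX] at hx
      obtain ⟨a, ha, b, hb, hab⟩ := Submodule.mem_sup.1 hx
      rw [← hab, map_add, huU a (hWU ha), huν b hb, add_zero]
    have huN : ∀ x ∈ N, ω (u : V) x = 0 := by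
      intro x hx
      rw [← hYνN] at hx
      obtain ⟨a, ha, b, hb, hab⟩ := Submodule.mem_sup.1 hx
      rw [← hab, map_add, huU a (hYU ha), huν b hb, add_zero]
    -- hence ↑u ∈ X by double orthogonality
    have huX' : (u : V) ∈ X := by
      have h2 : (u : V) ∈ LinearMap.BilinForm.orthogonal ω N := by
        intro x hx
        exact hrefl _ _ (huN x hx)
      rw [hNdef, hperp X] at h2
      rwa [LinearMap.BilinForm.orthogonal_orthogonal hndeg hrefl] at h2
    have huνmem : (u : V) ∈ ν := ⟨huX', huX⟩
    -- ν ⊓ U = ⊥ elementwise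
    have hy0 : y = 0 := by
      have : y ∈ ν := by
        refine ⟨?_, hYN hy⟩
        have : y = (u : V) - w := by rw [← hwy]; abel
        rw [this]
        exact X.sub_mem huX' (hWX hw)
      have : y ∈ Y ⊓ ν := ⟨hy, this⟩
      rwa [hYν, Submodule.mem_bot] at this
    have hw0 : w = 0 := by
      have : w ∈ W ⊓ ν := ⟨hw, by rw [hy0, add_zero] at hwy; rwa [hwy]⟩
      rwa [hWν, Submodule.mem_bot] at this
    ext
    rw [← hwy, hw0, hy0, add_zero]
    simp
  have hUP : IsCompl U (LinearMap.BilinForm.orthogonal ω U) :=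
    LinearMap.BilinForm.isCompl_orthogonal_of_restrict_nondegenerate hrefl hrestU
  set P : Submodule ℝ V := LinearMap.BilinForm.orthogonal ω U with hPdef
  have hUPvan : ∀ a b : V, a ∈ U → b ∈ P → ω a b = 0 := fun a b ha hb => hb a ha
  have hPUvan : ∀ a b : V, a ∈ P → b ∈ U → ω a b = 0 := fun a b ha hb =>
    hrefl _ _ (hUPvan b a hb ha)
  have hνP : ν ≤ P := by
    intro n hn u hu
    rw [hUdef] at hu
    obtain ⟨a, ha, b, hb, hab⟩ := Submodule.mem_sup.1 hu
    rw [← hab]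
    show ω (a + b) n = 0
    rw [map_add, LinearMap.add_apply, hXN a n (hWX ha) (hνN hn),
      hNX b n (hYN hb) (hνX hn), add_zero]
  -- decomposition of P as ν ⊕ C'
  obtain ⟨C', hC'⟩ := Submodule.exists_isCompl (ν.comap P.subtype)
  -- projections
  set projU : V →ₗ[ℝ] U := U.projectionOnto P hUP with hprojU
  set projP : V →ₗ[ℝ] P := P.projectionOnto U hUP.symm with hprojP
  set WU := W.comap U.subtype with hWUdef
  set YU := Y.comap U.subtype with hYUdef
  have hWYU : IsCompl WU YU := by
    constructor
    · rw [disjoint_iff]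
      ext x
      simp only [Submodule.mem_inf, Submodule.mem_bot, hWUdef, hYUdef,
        Submodule.mem_comap]
      constructor
      · rintro ⟨h1, h2⟩
        have : (x : V) ∈ W ⊓ Y := ⟨h1, h2⟩
        have hWY : W ⊓ Y = ⊥ := by
          rw [eq_bot_iff]
          intro z hz
          have hzν : z ∈ ν := ⟨hWX hz.1, hYN hz.2⟩
          have : z ∈ W ⊓ ν := ⟨hz.1, hzν⟩
          rwa [hWν] at this
        rw [hWY, Submodule.mem_bot] at this
        exact Subtype.ext this
      · rintro rfl; simp
    · rw [codisjoint_iff, eq_top_iff]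
      rintro ⟨x, hx⟩ -
      rw [hUdef] at hx
      obtain ⟨a, ha, b, hb, hab⟩ := Submodule.mem_sup.1 hx
      refine Submodule.mem_sup.2 ⟨⟨a, hWU ha⟩, ha, ⟨b, hYU hb⟩, hb, ?_⟩
      exact Subtype.ext hab
  set pW : V →ₗ[ℝ] W :=
    (Submodule.comapSubtypeEquivOfLe hWU).toLinearMap ∘ₗ
      (WU.projectionOnto YU hWYU) ∘ₗ projU with hpW
  set pY : V →ₗ[ℝ] Y :=
    (Submodule.comapSubtypeEquivOfLe hYU).toLinearMap ∘ₗ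
      (YU.projectionOnto WU hWYU.symm) ∘ₗ projU with hpY
  set νP := ν.comap P.subtype with hνPdef
  set pν : V →ₗ[ℝ] ν :=
    (Submodule.comapSubtypeEquivOfLe hνP).toLinearMap ∘ₗ
      (νP.projectionOnto C' hC') ∘ₗ projP with hpν
  set pC : V →ₗ[ℝ] C' := (C'.projectionOnto νP hC'.symm) ∘ₗ projP with hpC
  set cC : V →ₗ[ℝ] V := P.subtype ∘ₗ C'.subtype ∘ₗ pC with hcC
  -- decomposition
  have hdec : ∀ v : V, v = (pW v : V) + (pY v : V) + (pν v : V) + cC v := by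
    intro v
    have h1 : ((projU v : V)) + ((projP v : V)) = v :=
      Submodule.projection_add_projection_eq_self hUP v
    have h2 : ((pW v : V)) + ((pY v : V)) = (projU v : V) := by
      have h := Submodule.projection_add_projection_eq_self hWYU (projU v)
      have h' := congrArg (fun z : U => (z : V)) h
      simpa [hpW, hpY, Submodule.comapSubtypeEquivOfLe_apply_coe] using h'
    have h3 : ((pν v : V)) + cC v = (projP v : V) := by
      have h := Submodule.projection_add_projection_eq_self hC' (projP v)
      have h' := congrArg (fun z : P => (z : V)) h
      simpa [hpν, hpC, hcC, Submodule.comapSubtypeEquivOfLe_apply_coe] using h'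
    conv_lhs => rw [← h1]
    rw [← h2, ← h3]
    abel
  -- memberships of components
  have hmemW : ∀ v : V, (pW v : V) ∈ W := fun v => (pW v).2
  have hmemY : ∀ v : V, (pY v : V) ∈ Y := fun v => (pY v).2
  have hmemν : ∀ v : V, (pν v : V) ∈ ν := fun v => (pν v).2
  have hmemC : ∀ v : V, cC v ∈ P := fun v => ((C'.subtype (pC v)) : P).2
  -- dimension bookkeeping
  have hWYbot : W ⊓ Y = ⊥ := by
    rw [eq_bot_iff]
    intro z hz
    have hzν : z ∈ ν := ⟨hWX hz.1, hYN hz.2⟩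
    have : z ∈ W ⊓ ν := ⟨hz.1, hzν⟩
    rwa [hWν] at this
  have eq1 : finrank ℝ W + finrank ℝ ν = finrank ℝ X := by
    have h := Submodule.finrank_sup_add_finrank_inf_eq W ν
    rw [hWνX, hWν, finrank_bot, add_zero] at h
    exact h.symm
  have eq2 : finrank ℝ Y + finrank ℝ ν = finrank ℝ N := by
    have h := Submodule.finrank_sup_add_finrank_inf_eq Y ν
    rw [hYνN, hYν, finrank_bot, add_zero] at h
    exact h.symm
  have eq3 : finrank ℝ N = finrank ℝ V - finrank ℝ X := by
    rw [hNdef, hperp X]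
    exact LinearMap.BilinForm.finrank_orthogonal hndeg X
  have eq3' : finrank ℝ X ≤ finrank ℝ V := X.finrank_le
  have eq4 : finrank ℝ U = finrank ℝ W + finrank ℝ Y := by
    have h := Submodule.finrank_sup_add_finrank_inf_eq W Y
    rw [hWYbot, finrank_bot, add_zero] at h
    rw [hUdef, h]
  have eq5 : finrank ℝ U + finrank ℝ P = finrank ℝ V := by
    have h := Submodule.finrank_sup_add_finrank_inf_eq U P
    rw [hUP.sup_eq_top, hUP.inf_eq_bot, finrank_bot, add_zero, finrank_top] at h
    exact h.symm
  have eq6 : finrank ℝ νP + finrank ℝ C' = finrank ℝ P := by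
    have h := Submodule.finrank_sup_add_finrank_inf_eq νP C'
    rw [hC'.sup_eq_top, hC'.inf_eq_bot, finrank_bot, add_zero, finrank_top] at h
    exact h.symm
  have eq7 : finrank ℝ νP = finrank ℝ ν :=
    (Submodule.comapSubtypeEquivOfLe hνP).finrank_eq
  have eqC : finrank ℝ C' = finrank ℝ ν := by omega
  -- the pairing ν × C' → ℝ is nondegenerate : g is bijective
  set g : ν →ₗ[ℝ] Module.Dual ℝ C' :=
    ω.compl₁₂ ν.subtype (P.subtype ∘ₗ C'.subtype) with hgdef
  have hginj : Function.Injective g := by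
    rw [← LinearMap.ker_eq_bot, LinearMap.ker_eq_bot']
    intro n hn0
    have hzero : ∀ x : V, ω (n : V) x = 0 := by
      intro x
      conv_lhs => rw [show x = (pW x : V) + (pY x : V) + (pν x : V) + cC x from hdec x]
      have t1 : ω (n : V) (pW x : V) = 0 := hPUvan _ _ (hνP n.2) (hWU (hmemW x))
      have t2 : ω (n : V) (pY x : V) = 0 := hPUvan _ _ (hνP n.2) (hYU (hmemY x))
      have t3 : ω (n : V) (pν x : V) = 0 := hXN _ _ (hνX n.2) (hνN (hmemν x))
      have t4 : ω (n : V) (cC x) = 0 := by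
        have := congrArg (fun F => F (pC x)) hn0
        simpa [hgdef, LinearMap.compl₁₂_apply, hcC] using this
      simp [map_add, t1, t2, t3, t4]
    exact Subtype.ext (hndeg.1 (n : V) hzero)
  have hfing : finrank ℝ ν = finrank ℝ (Module.Dual ℝ C') := by
    rw [Subspace.dual_finrank_eq, eqC]
  set gE := g.linearEquivOfInjective hginj hfing with hgEdef
  set k : C' →ₗ[ℝ] ν :=
    gE.symm.toLinearMap ∘ₗ
      ((1/2 : ℝ) • ω.compl₁₂ (P.subtype ∘ₗ C'.subtype) (P.subtype ∘ₗ C'.subtype)) with hkdef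
  have hkprop : ∀ c c' : C', ω ((k c : ν) : V) (((c' : P)) : V)
      = (1/2) * ω (((c : P)) : V) (((c' : P)) : V) := by
    intro c c'
    have h1 : g (k c) = ((1/2 : ℝ) •
        ω.compl₁₂ (P.subtype ∘ₗ C'.subtype) (P.subtype ∘ₗ C'.subtype)) c := by
      rw [hkdef]
      simp only [LinearMap.comp_apply]
      rw [← LinearMap.linearEquivOfInjective_apply hginj hfing, ← hgEdef]
      simp
    have h2 := congrArg (fun F => F c') h1
    simpa [hgdef, LinearMap.compl₁₂_apply] using h2
  -- the four components of the map
  set e1 : V →ₗ[ℝ] (↥X ⧸ ν.comap X.subtype) :=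
    (ν.comap X.subtype).mkQ ∘ₗ Submodule.inclusion hWX ∘ₗ pW with he1
  set e2 : V →ₗ[ℝ] (↥N ⧸ ν.comap N.subtype) :=
    (ν.comap N.subtype).mkQ ∘ₗ Submodule.inclusion hYN ∘ₗ pY with he2
  set e3 : V →ₗ[ℝ] ν := pν + k ∘ₗ pC with he3
  set e4 : V →ₗ[ℝ] Module.Dual ℝ ν := ω.flip.compl₁₂ cC ν.subtype with he4
  set eL := e1.prod (e2.prod (e3.prod e4)) with heL
  -- the main identity
  have hmain : ∀ v w : V, ω v w =
      ωE (eL v).1 (eL w).1 + ωN (eL v).2.1 (eL w).2.1 +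
        ((eL w).2.2.2 (eL v).2.2.1 - (eL v).2.2.2 (eL w).2.2.1) := by
    intro v w
    have ha1 := hmemW v; have ha2 := hmemW w
    have hb1 := hmemY v; have hb2 := hmemY w
    have hn1 := hmemν v; have hn2 := hmemν w
    have hc1 := hmemC v; have hc2 := hmemC w
    -- vanishing terms
    have z1 : ω (pW v : V) (pY w : V) = 0 := hXN _ _ (hWX ha1) (hYN hb2)
    have z2 : ω (pW v : V) (pν w : V) = 0 := hXN _ _ (hWX ha1) (hνN hn2)
    have z3 : ω (pW v : V) (cC w) = 0 := hUPvan _ _ (hWU ha1) hc2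
    have z4 : ω (pY v : V) (pW w : V) = 0 := hNX _ _ (hYN hb1) (hWX ha2)
    have z5 : ω (pY v : V) (pν w : V) = 0 := hNX _ _ (hYN hb1) (hνX hn2)
    have z6 : ω (pY v : V) (cC w) = 0 := hUPvan _ _ (hYU hb1) hc2
    have z7 : ω (pν v : V) (pW w : V) = 0 := hNX _ _ (hνN hn1) (hWX ha2)
    have z8 : ω (pν v : V) (pY w : V) = 0 := hXN _ _ (hνX hn1) (hYN hb2)
    have z9 : ω (pν v : V) (pν w : V) = 0 := hXN _ _ (hνX hn1) (hνN hn2)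
    have z10 : ω (cC v) (pW w : V) = 0 := hPUvan _ _ hc1 (hWU ha2)
    have z11 : ω (cC v) (pY w : V) = 0 := hPUvan _ _ hc1 (hYU hb2)
    have hL : ω v w = ω (pW v : V) (pW w : V) + ω (pY v : V) (pY w : V)
        + ω (pν v : V) (cC w) + ω (cC v) (pν w : V) + ω (cC v) (cC w) := by
      conv_lhs =>
        rw [show v = (pW v : V) + (pY v : V) + (pν v : V) + cC v from hdec v,
          show w = (pW w : V) + (pY w : V) + (pν w : V) + cC w from hdec w]
      simp only [map_add, LinearMap.add_apply]
      linarith [z1, z2, z3, z4, z5, z6, z7, z8, z9, z10, z11]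
    have hE : ωE (eL v).1 (eL w).1 = ω (pW v : V) (pW w : V) := by
      have h := hωE (Submodule.inclusion hWX (pW v)) (Submodule.inclusion hWX (pW w))
      simpa [heL, he1, Submodule.coe_inclusion] using h
    have hNterm : ωN (eL v).2.1 (eL w).2.1 = ω (pY v : V) (pY w : V) := by
      have h := hωN (Submodule.inclusion hYN (pY v)) (Submodule.inclusion hYN (pY w))
      simpa [heL, he2, Submodule.coe_inclusion] using h
    have h3v : (eL w).2.2.2 (eL v).2.2.1
        = ω (pν v : V) (cC w) + (1/2) * ω (cC v) (cC w) := by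
      have hk1 := hkprop (pC v) (pC w)
      show e4 w (e3 v) = _
      rw [he4, he3]
      simp only [LinearMap.compl₁₂_apply, LinearMap.flip_apply, LinearMap.add_apply,
        LinearMap.comp_apply, Submodule.coe_subtype, Submodule.coe_add, map_add,
        LinearMap.add_apply]
      rw [show ((k (pC v) : ν) : V) = ((k (pC v) : ν) : V) from rfl]
      have : ω ((k (pC v) : ν) : V) (cC w) = (1/2) * ω (cC v) (cC w) := by
        simpa [hcC] using hk1
      linarith [this]
    have h3w : (eL v).2.2.2 (eL w).2.2.1
        = ω (pν w : V) (cC v) + (1/2) * ω (cC w) (cC v) := by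
      have hk1 := hkprop (pC w) (pC v)
      show e4 v (e3 w) = _
      rw [he4, he3]
      simp only [LinearMap.compl₁₂_apply, LinearMap.flip_apply, LinearMap.add_apply,
        LinearMap.comp_apply, Submodule.coe_subtype, Submodule.coe_add, map_add,
        LinearMap.add_apply]
      have : ω ((k (pC w) : ν) : V) (cC v) = (1/2) * ω (cC w) (cC v) := by
        simpa [hcC] using hk1
      linarith [this]
    have hanti1 := hanti (pν w : V) (cC v)
    have hanti2 := hanti (cC w) (cC v)
    rw [hE, hNterm, h3v, h3w, hL]
    linarith [hanti1, hanti2]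
  -- injectivity
  have hinj : Function.Injective eL := by
    rw [← LinearMap.ker_eq_bot, LinearMap.ker_eq_bot']
    intro v hv0
    by_contra hvne
    obtain ⟨w, hw⟩ := hnd v hvne
    apply hw
    have h := hmain v w
    rw [hv0] at h
    simpa using h
  -- dimension count
  have hfr : finrank ℝ V = finrank ℝ ((↥X ⧸ ν.comap X.subtype) ×
      (↥N ⧸ ν.comap N.subtype) × (↥ν × Module.Dual ℝ ↥ν)) := by
    rw [Module.finrank_prod, Module.finrank_prod, Module.finrank_prod,
      Subspace.dual_finrank_eq]
    have q1 := Submodule.finrank_quotient_add_finrank (ν.comap X.subtype)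
    have q2 := Submodule.finrank_quotient_add_finrank (ν.comap N.subtype)
    have c1 : finrank ℝ (ν.comap X.subtype) = finrank ℝ ν :=
      (Submodule.comapSubtypeEquivOfLe hνX).finrank_eq
    have c2 : finrank ℝ (ν.comap N.subtype) = finrank ℝ ν :=
      (Submodule.comapSubtypeEquivOfLe hνN).finrank_eq
    omega
  refine ⟨eL.linearEquivOfInjective hinj hfr, ?_⟩
  intro v w
  simp only [LinearMap.linearEquivOfInjective_apply]
  exact hmain v w
end

section
/- Let a Lie group G act properly on a symplectic manifold (M, ω) preserving ω, with Hamiltonian action and equivariant momentum map F: M → 𝔤*. Let H ⊆ G be the isotropy group of a point x ∈ M with α = F(x), 𝔥 = Lie(H). Then the image of the connected component of x in the fixed submanifold M_H = {m : G_m = H} under F lies in the affine subspace α + 𝔥° where 𝔥° is the annihilator of 𝔥 in 𝔤*: for all y in that component, F(y) - α annihilates 𝔥. -/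
/-- (chart version) If `F` is an equivariant momentum map,
`M_H` the set of points with isotropy exactly `H` (so the vector fields `ξ_M`,
`ξ ∈ 𝔥 = Lie(H)`, vanish on `M_H`), then along the connected component of `x` in
`M_H` (here: along any differentiable path in `M_H` from `x` to `y`) the momentum
map differs from `α = F(x)` by an element of the annihilator of `𝔥`:
`⟨ξ, F(y)⟩ = ⟨ξ, F(x)⟩` for all `ξ ∈ 𝔥`. -/
theorem stmt_15 {E 𝔤 : Type*} [NormedAddCommGroup E] [NormedSpace ℝ E]
    [NormedAddCommGroup 𝔤] [NormedSpace ℝ 𝔤]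
    (F : E → (𝔤 →L[ℝ] ℝ)) (hFdiff : Differentiable ℝ F)
    (ω : E → E →ₗ[ℝ] E →ₗ[ℝ] ℝ)
    (ξM : 𝔤 → E → E)
    (𝔥 : Submodule ℝ 𝔤)
    (MH : Set E)
    (hmom : ∀ (z : E) (v : E) (ξ : 𝔤), (fderiv ℝ F z v) ξ = ω z (ξM ξ z) v)
    (hfix : ∀ z ∈ MH, ∀ ξ ∈ 𝔥, ξM ξ z = 0)
    (x y : E) (γ : ℝ → E) (hγ : Differentiable ℝ γ)
    (hγ0 : γ 0 = x) (hγ1 : γ 1 = y) (hγMH : ∀ t : ℝ, γ t ∈ MH) :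
    ∀ ξ ∈ 𝔥, F y ξ = F x ξ := by
  intro ξ hξ
  have key : ∀ t : ℝ, HasDerivAt (fun t => F (γ t) ξ) 0 t := by
    intro t
    have h1 : HasDerivAt (fun t => F (γ t)) (fderiv ℝ F (γ t) (deriv γ t)) t :=
      (hFdiff (γ t)).hasFDerivAt.comp_hasDerivAt t (hγ t).hasDerivAt
    have h2 := h1.clm_apply (hasDerivAt_const t ξ)
    have h3 : (fderiv ℝ F (γ t) (deriv γ t)) ξ = 0 := by
      rw [hmom, hfix (γ t) (hγMH t) ξ hξ]
      simp
    rw [h3] at h2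
    simpa using h2
  have hconst : (fun t => F (γ t) ξ) 1 = (fun t => F (γ t) ξ) 0 :=
    is_const_of_deriv_eq_zero (fun t => (key t).differentiableAt)
      (fun t => (key t).deriv) 1 0
  simpa [hγ0, hγ1] using hconst
end
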